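/- Let (A, S) and (B, T) be monads, and let G̅ : A_S → B_T be a functor between Kleisli categories with G : A → B satisfying G̅ ∘ F_S = F_T ∘ G (a co-morphism of monads). If f : X → Y is a thunkable morphism of A_S (i.e. S(η^S_Y) ∘ f = η^S_{S Y} ∘ f as a Kleisli morphism f : X → S Y, where thunkability is expressed via the canonical abstract Kleisli structures), then G̅ f is a thunkable morphism of B_T. -/

import Mathlib

open CategoryTheory

/-- The morphism of the base category underlying a Kleisli morphism. -/
def kleisliHom {A : Type*} [Category A] {S : Monad A} {X Y : Kleisli S} (f : X ⟶ Y) :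
    @Quiver.Hom A _ X.of (S.obj Y.of) := f.of

/-- Let `(A, S)` and `(B, T)` be monads and `(G, G̅)` a co-morphism of monads, i.e. a functor
`G̅ : A_S ⥤ B_T` between the Kleisli categories and `G : A ⥤ B` with `G̅ ∘ F_S = F_T ∘ G`.
If `f : X ⟶ Y` is a thunkable morphism of `A_S` (i.e. `S(η^S_Y) ∘ f = η^S_{S Y} ∘ f` for the
underlying `f : X ⟶ S Y`, which expresses thunkability for the canonical abstract Kleisli
structures), then `G̅ f` is a thunkable morphism of `B_T`. -/
theorem comorphism_preserves_thunkable {A B : Type*} [Category A] [Category B]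
    (S : Monad A) (T : Monad B) (G : A ⥤ B) (Gbar : Kleisli S ⥤ Kleisli T)
    (hcomm : Kleisli.Adjunction.toKleisli S ⋙ Gbar = G ⋙ Kleisli.Adjunction.toKleisli T)
    {X Y : Kleisli S} (f : X ⟶ Y)
    (hf : kleisliHom f ≫ S.map (S.η.app Y.of) = kleisliHom f ≫ S.η.app (S.obj Y.of)) :
    kleisliHom (Gbar.map f) ≫ T.map (T.η.app (Gbar.obj Y).of) =
      kleisliHom (Gbar.map f) ≫ T.η.app (T.obj (Gbar.obj Y).of) := by
  set F₁ := Kleisli.Adjunction.toKleisli S with hF₁def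
  set F₂ := Kleisli.Adjunction.toKleisli T with hF₂def
  -- the counit-like morphism `ε : S Y ⟶ Y` in the Kleisli category, underlying `𝟙 (S Y)`
  let eps : @Quiver.Hom (Kleisli S) CategoryStruct.toQuiver (F₁.obj ((S : A ⥤ A).obj Y.of)) Y :=
    Kleisli.Hom.mk (show ((S : A ⥤ A).obj Y.of ⟶ (S : A ⥤ A).obj Y.of) from 𝟙 _)
  -- Three equations in `Kleisli S`.
  have e1 : f ≫ F₁.map (S.η.app Y.of) = F₁.map (kleisliHom f) := by
    ext
    show kleisliHom f ≫ S.map (S.η.app Y.of ≫ S.η.app (S.obj Y.of)) ≫ S.μ.app (S.obj Y.of)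
        = kleisliHom f ≫ S.η.app (S.obj Y.of)
    simpa using hf
  have e2 : F₁.map (kleisliHom f) ≫ eps = f := by
    ext
    show (kleisliHom f ≫ S.η.app (S.obj Y.of)) ≫ S.map (𝟙 (S.obj Y.of)) ≫ S.μ.app Y.of
        = kleisliHom f
    simp [Monad.left_unit]
  have e3 : F₁.map (S.η.app Y.of) ≫ eps = 𝟙 Y := by
    ext
    show (S.η.app Y.of ≫ S.η.app (S.obj Y.of)) ≫ S.map (𝟙 (S.obj Y.of)) ≫ S.μ.app Y.of = S.η.app Y.of
    simp [Monad.left_unit]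
  -- Push through `Gbar`.
  have E1 : Gbar.map f ≫ Gbar.map (F₁.map (S.η.app Y.of)) = Gbar.map (F₁.map (kleisliHom f)) := by
    erw [← Functor.map_comp, e1]
    rfl
  have E2 : Gbar.map (F₁.map (kleisliHom f)) ≫ Gbar.map eps = Gbar.map f := by
    rw [← Functor.map_comp, e2]
    rfl
  have E3 : Gbar.map (F₁.map (S.η.app Y.of)) ≫ Gbar.map eps = 𝟙 (Gbar.obj Y) := by
    rw [← Functor.map_comp, e3]
    exact Gbar.map_id Y
  -- Rewrite `Gbar (F₁ h)` as `F₂ (G h)` with eqToHoms.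
  have hθ := Functor.congr_hom hcomm (S.η.app Y.of)
  have hFf := Functor.congr_hom hcomm (kleisliHom f)
  simp only [Functor.comp_map] at hθ hFf
  erw [hθ, hFf] at E1
  rw [hFf] at E2
  rw [hθ] at E3
  -- Fold eqToHoms into `F₂`-images.
  have eqY : @Eq B (Gbar.obj Y).of (G.obj Y.of) := congrArg Kleisli.of (Functor.congr_obj hcomm Y.of)
  have eqX : @Eq B (Gbar.obj X).of (G.obj X.of) := congrArg Kleisli.of (Functor.congr_obj hcomm X.of)
  let aa : @Quiver.Hom B CategoryStruct.toQuiver (Gbar.obj Y).of (G.obj (S.obj Y.of)) :=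
    eqToHom eqY ≫ G.map (S.η.app Y.of)
  let bb : @Quiver.Hom B CategoryStruct.toQuiver (Gbar.obj X).of (G.obj (S.obj Y.of)) :=
    eqToHom eqX ≫ G.map (kleisliHom f)
  have haa : eqToHom (Functor.congr_obj hcomm Y.of) ≫ F₂.map (G.map (S.η.app Y.of)) = F₂.map aa := by
    have h2 : F₂.map aa = F₂.map (eqToHom eqY) ≫ F₂.map (G.map (S.η.app Y.of)) := F₂.map_comp _ _
    rw [h2, eqToHom_map]
    rfl
  have hbb : eqToHom (Functor.congr_obj hcomm X.of) ≫ F₂.map (G.map (kleisliHom f)) = F₂.map bb := by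
    have h2 : F₂.map bb = F₂.map (eqToHom eqX) ≫ F₂.map (G.map (kleisliHom f)) := F₂.map_comp _ _
    rw [h2, eqToHom_map]
    rfl
  let dd : (F₂.obj (G.obj (S.obj Y.of)) : Kleisli T) ⟶ Gbar.obj Y :=
    eqToHom (Functor.congr_obj hcomm ((S : A ⥤ A).obj Y.of)).symm ≫ Gbar.map eps
  have K1 : Gbar.map f ≫ F₂.map aa = F₂.map bb := by
    rw [← haa, ← hbb]
    refine (cancel_mono (eqToHom (Functor.congr_obj hcomm ((S : A ⥤ A).obj Y.of)).symm)).1 ?_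
    exact ((Category.assoc _ _ _).trans (whisker_eq _ (Category.assoc _ _ _))).trans
      (E1.trans (Category.assoc _ _ _).symm)
  have K2 : F₂.map bb ≫ dd = Gbar.map f := by
    rw [← hbb]
    refine Eq.trans ?_ E2
    dsimp only [dd]
    exact (Category.assoc _ _ _).symm.trans (eq_whisker (Category.assoc _ _ _) _)
  have K3 : F₂.map aa ≫ dd = 𝟙 (Gbar.obj Y) := by
    rw [← haa]
    refine Eq.trans ?_ E3
    dsimp only [dd]
    exact (Category.assoc _ _ _).symm.trans (eq_whisker (Category.assoc _ _ _) _)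
  -- Now work at the base level in `B`.
  let g₀ := @kleisliHom B _ T (Gbar.obj X) (Gbar.obj Y) (Gbar.map f)
  let d₀ : @Quiver.Hom B CategoryStruct.toQuiver (G.obj (S.obj Y.of)) (T.obj (Gbar.obj Y).of) :=
    @kleisliHom B _ T (F₂.obj (G.obj (S.obj Y.of))) (Gbar.obj Y) dd
  have base1 : g₀ ≫ T.map (aa ≫ T.η.app (G.obj (S.obj Y.of))) ≫ T.μ.app (G.obj (S.obj Y.of))
      = bb ≫ T.η.app (G.obj (S.obj Y.of)) := congrArg Kleisli.Hom.of K1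
  have base2 : (bb ≫ T.η.app (G.obj (S.obj Y.of))) ≫ T.map d₀ ≫ T.μ.app (Gbar.obj Y).of = g₀ :=
    congrArg Kleisli.Hom.of K2
  have base3 : (aa ≫ T.η.app (G.obj (S.obj Y.of))) ≫ T.map d₀ ≫ T.μ.app (Gbar.obj Y).of
      = T.η.app (Gbar.obj Y).of := congrArg Kleisli.Hom.of K3
  show g₀ ≫ T.map (T.η.app (Gbar.obj Y).of) = g₀ ≫ T.η.app (T.obj (Gbar.obj Y).of)
  clear_value aa bb dd g₀ d₀
  clear K1 K2 K3 E1 E2 E3 haa hbb hθ hFf e1 e2 e3 hf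
  have base1' : g₀ ≫ T.map aa = bb ≫ T.η.app (G.obj (S.obj Y.of)) := by
    rw [← base1, Functor.map_comp]
    simp
  have base2' : bb ≫ d₀ = g₀ := by
    rw [← base2, Category.assoc, ← T.η.naturality_assoc d₀]
    simp
  have base3' : aa ≫ d₀ = T.η.app (Gbar.obj Y).of := by
    rw [← base3, Category.assoc, ← T.η.naturality_assoc d₀]
    simp
  calc g₀ ≫ T.map (T.η.app (Gbar.obj Y).of) = g₀ ≫ T.map (aa ≫ d₀) := by rw [base3']
    _ = (g₀ ≫ T.map aa) ≫ T.map d₀ := by rw [Functor.map_comp, Category.assoc]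
    _ = bb ≫ T.η.app (G.obj (S.obj Y.of)) ≫ T.map d₀ := by rw [base1', Category.assoc]
    _ = bb ≫ d₀ ≫ T.η.app (T.obj (Gbar.obj Y).of) := by
          rw [← T.η.naturality d₀]
          simp
    _ = g₀ ≫ T.η.app (T.obj (Gbar.obj Y).of) := by rw [← Category.assoc, base2']
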